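/- The area of the horizontal sphere Σ₀ in the Berger sphere (S³, g_ρ) is 2π ∫₀^π √(sin²(s) + (ρ² - 1) sin⁴(s)) ds; in particular, for ρ = 1 it equals 4π. -/

import Mathlib

open Real

/-- The Euclidean (real) inner product on `ℂ² ≅ ℝ⁴`. -/
def rinner (a b : ℂ × ℂ) : ℝ :=
  (a.1 * (starRingEnd ℂ) b.1).re + (a.2 * (starRingEnd ℂ) b.2).re

/-- The Hopf vector field `ξ(z,w) = (iz, iw)`. -/
def hopfField (p : ℂ × ℂ) : ℂ × ℂ := (Complex.I * p.1, Complex.I * p.2)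

/-- The Berger metric `g_ρ(X,Y) = ⟨X,Y⟩ + (ρ²-1)⟨X,ξ⟩⟨Y,ξ⟩` at the point `p`. -/
def bergerMetric (ρ : ℝ) (p X Y : ℂ × ℂ) : ℝ :=
  rinner X Y + (ρ ^ 2 - 1) * rinner X (hopfField p) * rinner Y (hopfField p)

/-- Polar parametrization of the horizontal sphere `Σ₀ = {(z,w) ∈ S³ : w = w̄}` about the
pole `(0,0,1,0)`. -/
noncomputable def horizSphere (s θ : ℝ) : ℂ × ℂ :=
  ((Real.sin s : ℂ) * Complex.exp (θ * Complex.I), (Real.cos s : ℂ))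

/-- The partial derivative of the parametrization in the `s` direction. -/
noncomputable def horizSphereDs (s θ : ℝ) : ℂ × ℂ :=
  ((Real.cos s : ℂ) * Complex.exp (θ * Complex.I), (-Real.sin s : ℂ))

/-- The partial derivative of the parametrization in the `θ` direction. -/
noncomputable def horizSphereDθ (s θ : ℝ) : ℂ × ℂ :=
  (Complex.I * (Real.sin s : ℂ) * Complex.exp (θ * Complex.I), 0)

lemma rinner_ds_ds (s θ : ℝ) : rinner (horizSphereDs s θ) (horizSphereDs s θ) = 1 := by
  simp [rinner, horizSphereDs, Complex.mul_re, Complex.mul_im,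
    Complex.exp_ofReal_mul_I_re, Complex.exp_ofReal_mul_I_im, Complex.cos_ofReal_re,
    Complex.sin_ofReal_re]
  nlinarith [sin_sq_add_cos_sq s, sin_sq_add_cos_sq θ]

lemma rinner_dθ_dθ (s θ : ℝ) :
    rinner (horizSphereDθ s θ) (horizSphereDθ s θ) = Real.sin s ^ 2 := by
  simp [rinner, horizSphereDθ, Complex.mul_re, Complex.mul_im,
    Complex.exp_ofReal_mul_I_re, Complex.exp_ofReal_mul_I_im, Complex.cos_ofReal_re,
    Complex.sin_ofReal_re]
  nlinarith [sin_sq_add_cos_sq s, sin_sq_add_cos_sq θ]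

lemma rinner_ds_dθ (s θ : ℝ) : rinner (horizSphereDs s θ) (horizSphereDθ s θ) = 0 := by
  simp [rinner, horizSphereDs, horizSphereDθ, Complex.mul_re, Complex.mul_im,
    Complex.exp_ofReal_mul_I_re, Complex.exp_ofReal_mul_I_im, Complex.cos_ofReal_re,
    Complex.sin_ofReal_re]
  ring

lemma rinner_ds_hopf (s θ : ℝ) :
    rinner (horizSphereDs s θ) (hopfField (horizSphere s θ)) = 0 := by
  simp [rinner, horizSphereDs, hopfField, horizSphere, Complex.mul_re, Complex.mul_im,
    Complex.exp_ofReal_mul_I_re, Complex.exp_ofReal_mul_I_im, Complex.cos_ofReal_re,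
    Complex.sin_ofReal_re]
  ring

lemma rinner_dθ_hopf (s θ : ℝ) :
    rinner (horizSphereDθ s θ) (hopfField (horizSphere s θ)) = Real.sin s ^ 2 := by
  simp [rinner, horizSphereDθ, hopfField, horizSphere, Complex.mul_re, Complex.mul_im,
    Complex.exp_ofReal_mul_I_re, Complex.exp_ofReal_mul_I_im, Complex.cos_ofReal_re,
    Complex.sin_ofReal_re]
  nlinarith [sin_sq_add_cos_sq θ]

lemma integrand_eq (ρ s θ : ℝ) :
    Real.sqrt
        (bergerMetric ρ (horizSphere s θ) (horizSphereDs s θ) (horizSphereDs s θ) *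
            bergerMetric ρ (horizSphere s θ) (horizSphereDθ s θ) (horizSphereDθ s θ) -
          bergerMetric ρ (horizSphere s θ) (horizSphereDs s θ) (horizSphereDθ s θ) ^ 2) =
      Real.sqrt (Real.sin s ^ 2 + (ρ ^ 2 - 1) * Real.sin s ^ 4) := by
  unfold bergerMetric
  rw [rinner_ds_ds, rinner_dθ_dθ, rinner_ds_dθ, rinner_ds_hopf, rinner_dθ_hopf]
  ring_nf

/-- The area of the horizontal sphere `Σ₀` in the Berger sphere `(S³, g_ρ)`, computed via
the polar parametrization, equals `2π ∫₀^π √(sin²s + (ρ²-1) sin⁴s) ds`; in particular for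
`ρ = 1` it equals `4π`. -/
theorem berger_area_horizontal_sphere (ρ : ℝ) :
    (∀ s θ : ℝ, HasDerivAt (fun t => horizSphere t θ) (horizSphereDs s θ) s ∧
      HasDerivAt (fun t => horizSphere s t) (horizSphereDθ s θ) θ) ∧
    (∫ θ in (0 : ℝ)..(2 * π), ∫ s in (0 : ℝ)..π,
        Real.sqrt
          (bergerMetric ρ (horizSphere s θ) (horizSphereDs s θ) (horizSphereDs s θ) *
              bergerMetric ρ (horizSphere s θ) (horizSphereDθ s θ) (horizSphereDθ s θ) -
            bergerMetric ρ (horizSphere s θ) (horizSphereDs s θ) (horizSphereDθ s θ) ^ 2)) =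
      2 * π * ∫ s in (0 : ℝ)..π,
        Real.sqrt (Real.sin s ^ 2 + (ρ ^ 2 - 1) * Real.sin s ^ 4) ∧
    (ρ = 1 →
      (2 * π * ∫ s in (0 : ℝ)..π,
        Real.sqrt (Real.sin s ^ 2 + (ρ ^ 2 - 1) * Real.sin s ^ 4)) = 4 * π) := by
  refine ⟨?_, ?_, ?_⟩
  · intro s θ
    constructor
    · have h1 : HasDerivAt (fun t : ℝ => ((Real.sin t : ℂ)) * Complex.exp (θ * Complex.I))
          ((Real.cos s : ℂ) * Complex.exp (θ * Complex.I)) s :=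
        ((Real.hasDerivAt_sin s).ofReal_comp).mul_const _
      have h2 : HasDerivAt (fun t : ℝ => ((Real.cos t : ℂ))) ((-Real.sin s : ℂ)) s := by
        exact_mod_cast (Real.hasDerivAt_cos s).ofReal_comp
      exact h1.prodMk h2
    · have h0 : HasDerivAt (fun t : ℝ => ((t : ℂ) * Complex.I)) Complex.I θ := by
        simpa using ((hasDerivAt_id θ).ofReal_comp).mul_const Complex.I
      have h1 : HasDerivAt (fun t : ℝ => (Real.sin s : ℂ) * Complex.exp (t * Complex.I))
          ((Real.sin s : ℂ) * (Complex.exp (θ * Complex.I) * Complex.I)) θ :=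
        (h0.cexp).const_mul _
      have h2 : HasDerivAt (fun _ : ℝ => ((Real.cos s : ℂ))) 0 θ := hasDerivAt_const _ _
      have h3 := h1.prodMk h2
      convert h3 using 2
      · rfl
      all_goals simp only [horizSphereDθ]
      ring
  · have hInner : ∀ θ : ℝ,
        (∫ s in (0 : ℝ)..π,
          Real.sqrt
            (bergerMetric ρ (horizSphere s θ) (horizSphereDs s θ) (horizSphereDs s θ) *
                bergerMetric ρ (horizSphere s θ) (horizSphereDθ s θ) (horizSphereDθ s θ) -
              bergerMetric ρ (horizSphere s θ) (horizSphereDs s θ) (horizSphereDθ s θ) ^ 2)) =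
        ∫ s in (0 : ℝ)..π, Real.sqrt (Real.sin s ^ 2 + (ρ ^ 2 - 1) * Real.sin s ^ 4) := by
      intro θ
      exact intervalIntegral.integral_congr fun s _ => integrand_eq ρ s θ
    simp only [hInner]
    rw [intervalIntegral.integral_const]
    simp [mul_comm]
  · intro hρ
    subst hρ
    have hEq : ∀ s ∈ Set.uIcc (0:ℝ) π,
        Real.sqrt (Real.sin s ^ 2 + ((1:ℝ) ^ 2 - 1) * Real.sin s ^ 4) = Real.sin s := by
      intro s hs
      rw [Set.uIcc_of_le pi_nonneg] at hs
      have := Real.sin_nonneg_of_mem_Icc hs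
      rw [show Real.sin s ^ 2 + ((1:ℝ) ^ 2 - 1) * Real.sin s ^ 4 = Real.sin s ^ 2 by ring,
        Real.sqrt_sq this]
    rw [intervalIntegral.integral_congr hEq, integral_sin]
    norm_num
    ring
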